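/- Let G be an m×n real matrix, Γ an m×m real symmetric positive definite matrix, C₀ an n×n real symmetric positive semidefinite matrix, y ∈ ℝᵐ, ū₀ ∈ ℝⁿ and η > 0. Assume ‖Γ^{-1/2}(y − G ū₀)‖ > η, let 0 < ρ < 1/‖(G C₀ G^T + Γ)^{1/2} Γ^{-1/2}‖², and let τ > max{ ‖(G C₀ G^T + Γ)^{-1/2} Γ^{1/2}‖², 1/ρ } · ‖Γ^{-1/2}(y − G ū₀)‖ / η. Define ū₁ = ū₀ + C₀ G^T (G C₀ G^T + Γ)^{-1}(y − G ū₀). Then: (a) ρ < 1 and τ > 1/ρ; (b) the parameter α = 1 satisfies the discrepancy condition ρ‖Γ^{-1/2}(y − G ū₀)‖ ≤ ‖Γ^{1/2}(G C₀ G^T + Γ)^{-1}(y − G ū₀)‖; and (c) ‖Γ^{-1/2}(y − G ū₁)‖ < τ η, i.e. the IR-ES stopping criterion (2.2) is satisfied after one iteration. -/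

import Mathlib

open Matrix

/-- The Euclidean norm of a vector in `ℝⁿ`. -/
noncomputable def euclNorm {k : ℕ} (v : Fin k → ℝ) : ℝ :=
  ‖(WithLp.equiv 2 (Fin k → ℝ)).symm v‖

/-- The operator (spectral) norm of a matrix, induced by the Euclidean norms. -/
noncomputable def l2OpNorm {k l : ℕ} (A : Matrix (Fin k) (Fin l) ℝ) : ℝ :=
  ‖LinearMap.toContinuousLinearMap (Matrix.toEuclideanLin A)‖

/-- The positive semidefinite square root of a positive semidefinite matrix (the definition
of `Matrix.PosSemidef.sqrt` in the older Mathlib, which has since been removed). -/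
noncomputable def Matrix.PosSemidef.sqrt {n : Type*} [Fintype n] [DecidableEq n]
    {A : Matrix n n ℝ} (hA : A.PosSemidef) : Matrix n n ℝ :=
  hA.1.eigenvectorUnitary.1 * diagonal (Real.sqrt ∘ hA.1.eigenvalues) *
  (star hA.1.eigenvectorUnitary : Matrix n n ℝ)

namespace IRESaux

lemma sqrt_isHermitian' {n : Type*} [Fintype n] [DecidableEq n]
    {A : Matrix n n ℝ} (hA : A.PosSemidef) : hA.sqrt.IsHermitian := by
  unfold Matrix.PosSemidef.sqrt
  simp [IsHermitian, Matrix.mul_assoc, Matrix.star_eq_conjTranspose, conjTranspose_eq_transpose_of_trivial]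

lemma sqrt_mul_self' {n : Type*} [Fintype n] [DecidableEq n]
    {A : Matrix n n ℝ} (hA : A.PosSemidef) : hA.sqrt * hA.sqrt = A := by
  unfold Matrix.PosSemidef.sqrt
  have hU : (star hA.1.eigenvectorUnitary : Matrix n n ℝ) * hA.1.eigenvectorUnitary.1 = 1 :=
    Unitary.coe_star_mul_self _
  have hD : diagonal (Real.sqrt ∘ hA.1.eigenvalues) * diagonal (Real.sqrt ∘ hA.1.eigenvalues)
      = diagonal (RCLike.ofReal ∘ hA.1.eigenvalues) := by
    rw [diagonal_mul_diagonal]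
    congr 1; funext i
    simp [Real.mul_self_sqrt (hA.eigenvalues_nonneg i)]
  calc _ = hA.1.eigenvectorUnitary.1 * (diagonal (Real.sqrt ∘ hA.1.eigenvalues) *
        ((star hA.1.eigenvectorUnitary : Matrix n n ℝ) * hA.1.eigenvectorUnitary.1) *
        diagonal (Real.sqrt ∘ hA.1.eigenvalues)) * (star hA.1.eigenvectorUnitary : Matrix n n ℝ) := by
          simp only [Matrix.mul_assoc]
    _ = A := by
      rw [hU, Matrix.mul_one, hD]
      conv_rhs => rw [hA.1.spectral_theorem]
      rfl

lemma clm_apply {k l : ℕ} (A : Matrix (Fin k) (Fin l) ℝ) (v : Fin l → ℝ) :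
    (LinearMap.toContinuousLinearMap (Matrix.toEuclideanLin A))
      ((WithLp.equiv 2 (Fin l → ℝ)).symm v) = (WithLp.equiv 2 (Fin k → ℝ)).symm (A *ᵥ v) := rfl

lemma mulVec_le {k l : ℕ} (A : Matrix (Fin k) (Fin l) ℝ) (v : Fin l → ℝ) :
    euclNorm (A *ᵥ v) ≤ l2OpNorm A * euclNorm v := by
  have h := (LinearMap.toContinuousLinearMap (Matrix.toEuclideanLin A)).le_opNorm
      ((WithLp.equiv 2 (Fin l → ℝ)).symm v)
  rw [clm_apply] at h
  exact h

lemma euclNorm_nonneg {k : ℕ} (v : Fin k → ℝ) : 0 ≤ euclNorm v := norm_nonneg _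

lemma euclNorm_pos {k : ℕ} {v : Fin k → ℝ} (h : v ≠ 0) : 0 < euclNorm v := by
  rw [euclNorm, norm_pos_iff]
  intro hv
  apply h
  have := congrArg (WithLp.equiv 2 (Fin k → ℝ)) hv
  simpa using this

lemma euclNorm_sq {k : ℕ} (v : Fin k → ℝ) : euclNorm v ^ 2 = v ⬝ᵥ v := by
  rw [euclNorm, ← real_inner_self_eq_norm_sq]
  simp only [PiLp.inner_apply, dotProduct, RCLike.inner_apply]
  simp

lemma opNorm_transpose {k l : ℕ} (A : Matrix (Fin k) (Fin l) ℝ) :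
    l2OpNorm Aᵀ = l2OpNorm A := by
  have h1 : Aᵀ = Aᴴ := by ext i j; simp [conjTranspose_apply]
  rw [l2OpNorm, h1, Matrix.toEuclideanLin_conjTranspose_eq_adjoint,
    LinearMap.adjoint_toContinuousLinearMap]
  exact LinearIsometryEquiv.norm_map ContinuousLinearMap.adjoint _

lemma opNorm_nonneg {k l : ℕ} (A : Matrix (Fin k) (Fin l) ℝ) : 0 ≤ l2OpNorm A :=
  norm_nonneg _

lemma mulVec_sq {k l : ℕ} (M : Matrix (Fin k) (Fin l) ℝ) (v : Fin l → ℝ) :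
    (M *ᵥ v) ⬝ᵥ (M *ᵥ v) = v ⬝ᵥ ((Mᵀ * M) *ᵥ v) := by
  rw [← mulVec_mulVec]
  conv_rhs => rw [dotProduct_mulVec, vecMul_transpose]

end IRESaux

open IRESaux


set_option maxHeartbeats 1000000 in
/-- deterministic content of Proposition 2: under conditions (1.47)-(1.49),
(a) `ρ < 1` and `τ > 1/ρ`; (b) `α = 1` satisfies the discrepancy condition; and (c) the
one-step updated mean `ū₁ = ū₀ + C₀ Gᵀ (G C₀ Gᵀ + Γ)⁻¹ (y − G ū₀)` satisfies the IR-ES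
stopping criterion `‖Γ^{-1/2}(y − G ū₁)‖ < τ η`.
(The hypothesis `hGCG` records that `G C₀ Gᵀ + Γ` is symmetric positive definite, which
follows from positive semidefiniteness of `C₀` and positive definiteness of `Γ`.) -/
theorem ires_linear_case {m n : ℕ}
    (G : Matrix (Fin m) (Fin n) ℝ) (Γ : Matrix (Fin m) (Fin m) ℝ)
    (C₀ : Matrix (Fin n) (Fin n) ℝ) (hΓ : Γ.PosDef) (hC₀ : C₀.PosSemidef)
    (hGCG : (G * C₀ * Gᵀ + Γ).PosDef)
    (y : Fin m → ℝ) (ubar₀ : Fin n → ℝ) (η : ℝ) (hη : 0 < η)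
    (h1 : euclNorm ((hΓ.posSemidef.sqrt)⁻¹ *ᵥ (y - G *ᵥ ubar₀)) > η)
    (ρ τ : ℝ) (h2 : 0 < ρ)
    (h2' : ρ < 1 / l2OpNorm (hGCG.posSemidef.sqrt * (hΓ.posSemidef.sqrt)⁻¹) ^ 2)
    (h3 : τ > max (l2OpNorm ((hGCG.posSemidef.sqrt)⁻¹ * hΓ.posSemidef.sqrt) ^ 2) (1 / ρ) *
      (euclNorm ((hΓ.posSemidef.sqrt)⁻¹ *ᵥ (y - G *ᵥ ubar₀)) / η)) :
    let ubar₁ : Fin n → ℝ :=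
      ubar₀ + (C₀ * Gᵀ * (G * C₀ * Gᵀ + Γ)⁻¹) *ᵥ (y - G *ᵥ ubar₀)
    (ρ < 1 ∧ τ > 1 / ρ) ∧
    ρ * euclNorm ((hΓ.posSemidef.sqrt)⁻¹ *ᵥ (y - G *ᵥ ubar₀)) ≤
      euclNorm (hΓ.posSemidef.sqrt *ᵥ (G * C₀ * Gᵀ + Γ)⁻¹ *ᵥ (y - G *ᵥ ubar₀)) ∧
    euclNorm ((hΓ.posSemidef.sqrt)⁻¹ *ᵥ (y - G *ᵥ ubar₁)) < τ * η := by
  intro ubar₁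
  set B := hΓ.posSemidef.sqrt with hBdef
  set S : Matrix (Fin m) (Fin m) ℝ := G * C₀ * Gᵀ + Γ with hSdef
  set A := hGCG.posSemidef.sqrt with hAdef
  set r := y - G *ᵥ ubar₀ with hrdef
  -- basic algebra facts
  have hBB : B * B = Γ := sqrt_mul_self' hΓ.posSemidef
  have hAA : A * A = S := sqrt_mul_self' hGCG.posSemidef
  have hBsym : Bᵀ = B := by
    have h := sqrt_isHermitian' hΓ.posSemidef
    simpa [Matrix.IsHermitian, conjTranspose_eq_transpose_of_trivial] using h
  have hAsym : Aᵀ = A := by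
    have h := sqrt_isHermitian' hGCG.posSemidef
    simpa [Matrix.IsHermitian, conjTranspose_eq_transpose_of_trivial] using h
  have hdetB : IsUnit B.det := by
    have h : B.det * B.det = Γ.det := by rw [← det_mul, hBB]
    have := hΓ.det_pos
    exact isUnit_iff_ne_zero.2 (fun h0 => by rw [h0, mul_zero] at h; linarith)
  have hdetA : IsUnit A.det := by
    have h : A.det * A.det = S.det := by rw [← det_mul, hAA]
    have := hGCG.det_pos
    exact isUnit_iff_ne_zero.2 (fun h0 => by rw [h0, mul_zero] at h; linarith)
  have hBBi : B * B⁻¹ = 1 := mul_nonsing_inv _ hdetB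
  have hBiB : B⁻¹ * B = 1 := nonsing_inv_mul _ hdetB
  have hAAi : A * A⁻¹ = 1 := mul_nonsing_inv _ hdetA
  have hAiA : A⁻¹ * A = 1 := nonsing_inv_mul _ hdetA
  have hSSi : S * S⁻¹ = 1 := mul_nonsing_inv _ hGCG.det_pos.ne'.isUnit
  have hBiT : (B⁻¹)ᵀ = B⁻¹ := by rw [transpose_nonsing_inv, hBsym]
  have hAiT : (A⁻¹)ᵀ = A⁻¹ := by rw [transpose_nonsing_inv, hAsym]
  have hSi : S⁻¹ = A⁻¹ * A⁻¹ := by rw [← hAA, Matrix.mul_inv_rev]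
  set N := euclNorm (B⁻¹ *ᵥ r) with hNdef
  set K := l2OpNorm (A * B⁻¹) with hKdef
  set L := l2OpNorm (A⁻¹ * B) with hLdef
  have hN : η < N := h1
  have hNpos : 0 < N := lt_trans hη hN
  -- r ≠ 0
  have hr0 : r ≠ 0 := by
    intro h0
    rw [h0, mulVec_zero] at hNdef
    have : N = 0 := by rw [hNdef, euclNorm]; simp
    linarith
  have hrpos : 0 < euclNorm r := euclNorm_pos hr0
  -- K ≥ 1
  have hlow : ∀ v : Fin m → ℝ, euclNorm v ≤ euclNorm ((A * B⁻¹) *ᵥ v) := by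
    intro v
    have hsq : (euclNorm v) ^ 2 ≤ (euclNorm ((A * B⁻¹) *ᵥ v)) ^ 2 := by
      rw [euclNorm_sq, euclNorm_sq, mulVec_sq]
      have hT : (A * B⁻¹)ᵀ * (A * B⁻¹) = 1 + B⁻¹ * (G * C₀ * Gᵀ) * B⁻¹ := by
        rw [transpose_mul, hBiT, hAsym]
        calc B⁻¹ * A * (A * B⁻¹) = B⁻¹ * (A * A) * B⁻¹ := by
              simp only [Matrix.mul_assoc]
          _ = B⁻¹ * Γ * B⁻¹ + B⁻¹ * (G * C₀ * Gᵀ) * B⁻¹ := by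
              rw [hAA, hSdef, Matrix.mul_add, Matrix.add_mul]; abel
          _ = 1 + B⁻¹ * (G * C₀ * Gᵀ) * B⁻¹ := by
              rw [← hBB]
              congr 1
              calc B⁻¹ * (B * B) * B⁻¹ = B⁻¹ * B * (B * B⁻¹) := by
                    simp only [Matrix.mul_assoc]
                _ = 1 := by rw [hBiB, hBBi, one_mul]
      rw [hT, Matrix.add_mulVec, dotProduct_add, one_mulVec]
      have hPSD : (B⁻¹ * (G * C₀ * Gᵀ) * B⁻¹).PosSemidef := by
        have h := hC₀.conjTranspose_mul_mul_same (Gᵀ * B⁻¹)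
        have he : (Gᵀ * B⁻¹)ᴴ * C₀ * (Gᵀ * B⁻¹) = B⁻¹ * (G * C₀ * Gᵀ) * B⁻¹ := by
          rw [conjTranspose_eq_transpose_of_trivial, transpose_mul, hBiT, transpose_transpose]
          simp only [Matrix.mul_assoc]
        rwa [he] at h
      have hnn : 0 ≤ v ⬝ᵥ ((B⁻¹ * (G * C₀ * Gᵀ) * B⁻¹) *ᵥ v) := by
        simpa using hPSD.dotProduct_mulVec_nonneg v
      linarith
    have h0 := euclNorm_nonneg v
    have h0' := euclNorm_nonneg ((A * B⁻¹) *ᵥ v)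
    nlinarith
  have hK1 : 1 ≤ K := by
    have h := le_trans (hlow r) (mulVec_le (A * B⁻¹) r)
    nlinarith
  have hKpos : 0 < K := lt_of_lt_of_le one_pos hK1
  have hK2pos : 0 < K ^ 2 := by positivity
  have hρK : ρ * K ^ 2 < 1 := (lt_div_iff₀ hK2pos).mp h2'
  -- (a)
  have ha1 : ρ < 1 := by nlinarith
  have hmax : (1:ℝ) / ρ ≤ max (L ^ 2) (1 / ρ) := le_max_right _ _
  have hmaxpos : 0 < max (L ^ 2) (1 / ρ) := lt_of_lt_of_le (by positivity) hmax
  have ha2 : τ > 1 / ρ := by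
    have hNη : 1 < N / η := (one_lt_div hη).mpr hN
    calc 1 / ρ = (1 / ρ) * 1 := by ring
      _ < max (L ^ 2) (1 / ρ) * (N / η) := by
          apply mul_lt_mul' hmax hNη zero_le_one hmaxpos
      _ < τ := h3
  -- (b)
  have hLT : l2OpNorm (B⁻¹ * A) = K := by
    rw [hKdef, ← opNorm_transpose (A := A * B⁻¹), transpose_mul, hBiT, hAsym]
  have hb : ρ * N ≤ euclNorm (B *ᵥ S⁻¹ *ᵥ r) := by
    set M := euclNorm (B *ᵥ S⁻¹ *ᵥ r) with hMdef
    have hMnn : 0 ≤ M := euclNorm_nonneg _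
    have cB : ∀ X : Matrix (Fin m) (Fin m) ℝ, B⁻¹ * (B * X) = X := fun X => by
      rw [← Matrix.mul_assoc, hBiB, Matrix.one_mul]
    have hmat : B⁻¹ * A * (A * B⁻¹ * (B * S⁻¹)) = B⁻¹ := by
      simp only [Matrix.mul_assoc]
      rw [cB, ← Matrix.mul_assoc A A, hAA, hSSi, Matrix.mul_one]
    have hid : B⁻¹ *ᵥ r = (B⁻¹ * A) *ᵥ ((A * B⁻¹) *ᵥ (B *ᵥ S⁻¹ *ᵥ r)) := by
      simp only [mulVec_mulVec]
      rw [hmat]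
    have hchain : N ≤ K * (K * M) := by
      rw [hNdef, hid]
      calc euclNorm ((B⁻¹ * A) *ᵥ ((A * B⁻¹) *ᵥ (B *ᵥ S⁻¹ *ᵥ r)))
          ≤ l2OpNorm (B⁻¹ * A) * euclNorm ((A * B⁻¹) *ᵥ (B *ᵥ S⁻¹ *ᵥ r)) := mulVec_le _ _
        _ ≤ K * (K * M) := by
            rw [hLT]
            exact mul_le_mul_of_nonneg_left (mulVec_le _ _) (le_of_lt hKpos)
    nlinarith
  refine ⟨⟨ha1, ha2⟩, hb, ?_⟩
  -- (c)
  have hres : y - G *ᵥ ubar₁ = (Γ * S⁻¹) *ᵥ r := by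
    show y - G *ᵥ (ubar₀ + (C₀ * Gᵀ * S⁻¹) *ᵥ r) = (Γ * S⁻¹) *ᵥ r
    rw [mulVec_add, mulVec_mulVec]
    have hΓS : Γ * S⁻¹ = 1 - G * (C₀ * Gᵀ * S⁻¹) := by
      have h4 : G * (C₀ * Gᵀ * S⁻¹) = (G * C₀ * Gᵀ) * S⁻¹ := by simp only [Matrix.mul_assoc]
      have h5 : Γ = S - G * C₀ * Gᵀ := by rw [hSdef]; abel
      rw [h4, h5, Matrix.sub_mul, hSSi]
    rw [hΓS, Matrix.sub_mulVec, one_mulVec, hrdef]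
    abel
  rw [hres]
  have cB : ∀ X : Matrix (Fin m) (Fin m) ℝ, B⁻¹ * (B * X) = X := fun X => by
    rw [← Matrix.mul_assoc, hBiB, Matrix.one_mul]
  have hmat2 : B⁻¹ * (Γ * S⁻¹) = B * A⁻¹ * (A⁻¹ * B * B⁻¹) := by
    rw [← hBB, hSi]
    simp only [Matrix.mul_assoc]
    rw [cB, hBBi, Matrix.mul_one]
  have hkey : (B⁻¹) *ᵥ ((Γ * S⁻¹) *ᵥ r) = (B * A⁻¹) *ᵥ ((A⁻¹ * B) *ᵥ (B⁻¹ *ᵥ r)) := by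
    simp only [mulVec_mulVec]
    rw [hmat2]
  rw [hkey]
  have hBA : l2OpNorm (B * A⁻¹) = L := by
    rw [hLdef, ← opNorm_transpose (A := A⁻¹ * B), transpose_mul, hAiT, hBsym]
  have hchain2 : euclNorm ((B * A⁻¹) *ᵥ ((A⁻¹ * B) *ᵥ (B⁻¹ *ᵥ r))) ≤ L * (L * N) := by
    calc euclNorm ((B * A⁻¹) *ᵥ ((A⁻¹ * B) *ᵥ (B⁻¹ *ᵥ r)))
        ≤ l2OpNorm (B * A⁻¹) * euclNorm ((A⁻¹ * B) *ᵥ (B⁻¹ *ᵥ r)) := mulVec_le _ _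
      _ ≤ L * (L * N) := by
          rw [hBA]
          have hLnn0 : 0 ≤ L := by rw [hLdef]; exact opNorm_nonneg _
          exact mul_le_mul_of_nonneg_left (mulVec_le _ _) hLnn0
  have hLnn : 0 ≤ L := by rw [hLdef]; exact opNorm_nonneg _
  have hmax2 : L ^ 2 * N ≤ max (L ^ 2) (1 / ρ) * N :=
    mul_le_mul_of_nonneg_right (le_max_left _ _) (le_of_lt hNpos)
  have hfin : max (L ^ 2) (1 / ρ) * N < τ * η := by
    calc max (L ^ 2) (1 / ρ) * N = max (L ^ 2) (1 / ρ) * (N / η) * η := by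
          field_simp
      _ < τ * η := mul_lt_mul_of_pos_right h3 hη
  calc euclNorm ((B * A⁻¹) *ᵥ ((A⁻¹ * B) *ᵥ (B⁻¹ *ᵥ r))) ≤ L * (L * N) := hchain2
    _ = L ^ 2 * N := by ring
    _ ≤ max (L ^ 2) (1 / ρ) * N := hmax2
    _ < τ * η := hfin
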